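/- Fix $\beta, \kappa > 0$ and a bounded measurable even potential $W : \mathbb{R}^d \to \mathbb{R}$ with $\kappa\beta\|W\|_{L^\infty} < 1$, together with a confining potential $A(x) = \frac{a}{2}|x|^2$, $a > 0$. Then the Gibbs fixed-point equation $M(x,v) = c_M \exp\big[-\beta(\tfrac12|v|^2 + A(x) + \kappa\, W * \rho_M(x))\big]$, where $\rho_M(x) = \int M(x,v)\,dv$ and $c_M$ normalizes $\int M = 1$, admits at most one solution $M$ in the class of probability densities on $\mathbb{R}^d\times\mathbb{R}^d$. -/

import Mathlib

open MeasureTheory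

lemma gibbs_aux_exp (t : ℝ) (ht : 0 ≤ t) :
    (1 - t) * Real.exp t ≤ (1 + t) * Real.exp (-t) := by
  set f : ℝ → ℝ := fun y => (1 + y) * Real.exp (-y) - (1 - y) * Real.exp y with hf
  have hder : ∀ x : ℝ, HasDerivAt f (x * Real.exp x - x * Real.exp (-x)) x := by
    intro x
    have h1 : HasDerivAt (fun y : ℝ => Real.exp (-y)) (-Real.exp (-x)) x := by
      exact ((Real.hasDerivAt_exp (-x)).comp x (hasDerivAt_neg x)).congr_deriv (by ring)
    have h2 : HasDerivAt (fun y : ℝ => (1 + y) * Real.exp (-y))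
        (1 * Real.exp (-x) + (1 + x) * (-Real.exp (-x))) x := by
      exact (((hasDerivAt_const x (1:ℝ)).add (hasDerivAt_id x)).mul h1).congr_deriv (by simp only [Pi.add_apply, id]; ring)
    have h3 : HasDerivAt (fun y : ℝ => (1 - y) * Real.exp y)
        ((-1) * Real.exp x + (1 - x) * Real.exp x) x := by
      have := ((hasDerivAt_const x (1:ℝ)).sub (hasDerivAt_id x)).mul (Real.hasDerivAt_exp x)
      exact this.congr_deriv (by simp only [Pi.sub_apply, id]; ring)
    have := h2.sub h3
    exact this.congr_deriv (by ring)
  have hmono : MonotoneOn f (Set.Ici (0:ℝ)) := by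
    apply monotoneOn_of_deriv_nonneg (convex_Ici 0)
    · apply Continuous.continuousOn
      fun_prop
    · intro x hx
      exact (hder x).differentiableAt.differentiableWithinAt
    · intro x hx
      rw [(hder x).deriv]
      rw [interior_Ici] at hx
      have hx0 : (0:ℝ) < x := hx
      have : Real.exp (-x) ≤ Real.exp x := Real.exp_le_exp.2 (by linarith)
      nlinarith
  have h0 : f 0 ≤ f t := hmono (by simp : (0:ℝ) ∈ Set.Ici (0:ℝ)) ht ht
  have hf0 : f 0 = 0 := by simp [hf]
  rw [hf0] at h0
  simp only [hf] at h0
  linarith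

lemma gibbs_aux_exp2 (s : ℝ) (hs : 0 ≤ s) :
    2 * (Real.exp (-s) + Real.exp s - 2) ≤ s * (Real.exp s - Real.exp (-s)) := by
  have h := gibbs_aux_exp (s/2) (by linarith)
  have e1 : Real.exp (s/2) * Real.exp (s/2) = Real.exp s := by
    rw [← Real.exp_add]; ring_nf
  have e2 : Real.exp (-(s/2)) * Real.exp (-(s/2)) = Real.exp (-s) := by
    rw [← Real.exp_add]; ring_nf
  have e3 : Real.exp (s/2) * Real.exp (-(s/2)) = 1 := by
    rw [← Real.exp_add]; simp
  have hp1 : 0 < Real.exp (s/2) := Real.exp_pos _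
  have hp2 : 0 < Real.exp (-(s/2)) := Real.exp_pos _
  have hd : 0 ≤ Real.exp (s/2) - Real.exp (-(s/2)) := by
    have : Real.exp (-(s/2)) ≤ Real.exp (s/2) := Real.exp_le_exp.2 (by linarith)
    linarith
  nlinarith [mul_le_mul_of_nonneg_right h hd]

set_option maxHeartbeats 1000000 in
/-- uniqueness of the Gibbs fixed point. With a bounded even
interaction `W` satisfying `κβ‖W‖_∞ < 1` and quadratic confinement
`A(x) = (a/2)|x|²`, the fixed-point equation
`M(x,v) = c exp[-β(|v|²/2 + A(x) + κ (W * ρ_M)(x))]`, `ρ_M(x) = ∫ M(x,v) dv`,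
has at most one solution among probability densities on `ℝ^d × ℝ^d`. -/
theorem gibbs_fixed_point_unique (d : ℕ) (β κ a CW : ℝ)
    (hβ : 0 < β) (hκ : 0 < κ) (ha : 0 < a)
    (W : EuclideanSpace ℝ (Fin d) → ℝ) (hWmeas : Measurable W)
    (hWbd : ∀ x, |W x| ≤ CW) (hWeven : ∀ x, W (-x) = W x)
    (hsmall : κ * β * CW < 1)
    (M₁ M₂ : EuclideanSpace ℝ (Fin d) × EuclideanSpace ℝ (Fin d) → ℝ)
    (hM₁meas : Measurable M₁) (hM₂meas : Measurable M₂)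
    (hM₁pos : ∀ p, 0 ≤ M₁ p) (hM₂pos : ∀ p, 0 ≤ M₂ p)
    (hM₁prob : ∫ p, M₁ p = 1) (hM₂prob : ∫ p, M₂ p = 1)
    (hM₁fix : ∃ c₁ : ℝ, 0 < c₁ ∧ ∀ x v, M₁ (x, v) =
      c₁ * Real.exp (-β * (‖v‖ ^ 2 / 2 + a / 2 * ‖x‖ ^ 2
        + κ * ∫ y, W (x - y) * ∫ w, M₁ (y, w))))
    (hM₂fix : ∃ c₂ : ℝ, 0 < c₂ ∧ ∀ x v, M₂ (x, v) =
      c₂ * Real.exp (-β * (‖v‖ ^ 2 / 2 + a / 2 * ‖x‖ ^ 2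
        + κ * ∫ y, W (x - y) * ∫ w, M₂ (y, w)))) :
    M₁ = M₂ := by
  obtain ⟨c₁, hc₁, hfix₁⟩ := hM₁fix
  obtain ⟨c₂, hc₂, hfix₂⟩ := hM₂fix
  have hCW : 0 ≤ CW := le_trans (abs_nonneg _) (hWbd 0)
  set Z : ℝ := ∫ w : EuclideanSpace ℝ (Fin d), Real.exp (-β * (‖w‖ ^ 2 / 2)) with hZdef
  clear_value Z
  have main : ∀ (M : EuclideanSpace ℝ (Fin d) × EuclideanSpace ℝ (Fin d) → ℝ)
      (ρ : EuclideanSpace ℝ (Fin d) → ℝ) (c : ℝ),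
      Measurable M → (∀ p, 0 ≤ M p) → (∫ p, M p) = 1 →
      ρ = (fun y => ∫ w, M (y, w)) →
      (∀ x v, M (x, v) = c * Real.exp (-β * (‖v‖ ^ 2 / 2 + a / 2 * ‖x‖ ^ 2
        + κ * ∫ y, W (x - y) * ∫ w, M (y, w)))) →
      Integrable ρ ∧ (∫ y, ρ y) = 1 ∧ (∀ y, 0 ≤ ρ y) ∧
      (∀ x v, M (x, v) = c * Real.exp (-β * (‖v‖ ^ 2 / 2 + a / 2 * ‖x‖ ^ 2
        + κ * ∫ z, W (x - z) * ρ z))) ∧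
      (∀ y, ρ y = c * Z *
        Real.exp (-β * (a / 2 * ‖y‖ ^ 2 + κ * ∫ z, W (y - z) * ρ z))) := by
    intro M ρ c hMmeas hMpos hMprob hρ hfix
    subst hρ
    have hMint : Integrable M := by
      by_contra h
      rw [integral_undef h] at hMprob; exact one_ne_zero hMprob.symm
    rw [Measure.volume_eq_prod] at hMint
    have hint : Integrable (fun y => ∫ w, M (y, w)) := hMint.integral_prod_left
    have hone : (∫ y, ∫ w, M (y, w)) = 1 := by
      have h := integral_prod M hMint
      rw [← Measure.volume_eq_prod] at h
      rw [← h]; exact hMprob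
    refine ⟨hint, hone, fun y => integral_nonneg fun w => hMpos _, fun x v => hfix x v, ?_⟩
    intro y
    have key : ∀ v : EuclideanSpace ℝ (Fin d), M (y, v) =
        (c * Real.exp (-β * (a / 2 * ‖y‖ ^ 2 + κ * ∫ z, W (y - z) * ∫ w, M (z, w))))
          * Real.exp (-β * (‖v‖ ^ 2 / 2)) := by
      intro v
      rw [hfix y v, mul_assoc, ← Real.exp_add]
      congr 2
      ring
    calc (∫ w, M (y, w))
        = ∫ v : EuclideanSpace ℝ (Fin d),
            (c * Real.exp (-β * (a / 2 * ‖y‖ ^ 2 + κ * ∫ z, W (y - z) * ∫ w, M (z, w))))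
              * Real.exp (-β * (‖v‖ ^ 2 / 2)) := by
          simp only [key]
      _ = c * Z * Real.exp (-β * (a / 2 * ‖y‖ ^ 2 + κ * ∫ z, W (y - z) * ∫ w, M (z, w))) := by
          rw [integral_const_mul, hZdef]; ring
  set ρ₁ : EuclideanSpace ℝ (Fin d) → ℝ := fun y => ∫ w, M₁ (y, w) with hρ₁def
  set ρ₂ : EuclideanSpace ℝ (Fin d) → ℝ := fun y => ∫ w, M₂ (y, w) with hρ₂def
  obtain ⟨hρ₁int, hρ₁one, hρ₁nn, hfixρ₁, hρ₁form⟩ :=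
    main M₁ ρ₁ c₁ hM₁meas hM₁pos hM₁prob hρ₁def hfix₁
  obtain ⟨hρ₂int, hρ₂one, hρ₂nn, hfixρ₂, hρ₂form⟩ :=
    main M₂ ρ₂ c₂ hM₂meas hM₂pos hM₂prob hρ₂def hfix₂
  clear hfix₁ hfix₂ main
  clear_value ρ₁ ρ₂
  -- interaction integrals
  have hWint : ∀ (g : EuclideanSpace ℝ (Fin d) → ℝ), Integrable g →
      ∀ x, Integrable fun y => W (x - y) * g y := by
    intro g hg x
    refine hg.bdd_mul ((hWmeas.comp (measurable_const.sub measurable_id)).aestronglyMeasurable)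
      (c := CW) (Filter.Eventually.of_forall fun y => ?_)
    rw [Real.norm_eq_abs]
    exact hWbd _
  set T : ℝ := ∫ y, |ρ₁ y - ρ₂ y| with hTdef
  clear_value T
  have hTnn : 0 ≤ T := by
    rw [hTdef]; exact integral_nonneg fun y => abs_nonneg _
  have hUdiff : ∀ x, |(∫ z, W (x - z) * ρ₁ z) - ∫ z, W (x - z) * ρ₂ z| ≤ CW * T := by
    intro x
    rw [← integral_sub (hWint ρ₁ hρ₁int x) (hWint ρ₂ hρ₂int x)]
    have h1 : |∫ z, (W (x - z) * ρ₁ z - W (x - z) * ρ₂ z)|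
        ≤ ∫ z, |W (x - z) * ρ₁ z - W (x - z) * ρ₂ z| := by
      simpa [Real.norm_eq_abs] using
        norm_integral_le_integral_norm (fun z => W (x - z) * ρ₁ z - W (x - z) * ρ₂ z)
    refine h1.trans ?_
    have h2 : (∫ z, |W (x - z) * ρ₁ z - W (x - z) * ρ₂ z|) ≤ ∫ z, CW * |ρ₁ z - ρ₂ z| := by
      refine integral_mono ((hWint ρ₁ hρ₁int x).sub (hWint ρ₂ hρ₂int x)).abs
        ((hρ₁int.sub hρ₂int).abs.const_mul CW) fun z => ?_
      rw [← mul_sub, abs_mul]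
      exact mul_le_mul_of_nonneg_right (hWbd _) (abs_nonneg _)
    refine h2.trans ?_
    rw [integral_const_mul, hTdef]
  set s : ℝ := β * κ * (CW * T) with hsdef
  clear_value s
  have hs : 0 ≤ s := by rw [hsdef]; positivity
  set A : ℝ := Real.exp (-s) with hA
  set B : ℝ := Real.exp s with hB
  clear_value A B
  have hApos : 0 < A := by rw [hA]; positivity
  have hAB1 : A * B = 1 := by rw [hA, hB, ← Real.exp_add]; simp
  set Y : EuclideanSpace ℝ (Fin d) → ℝ := fun x =>
    Real.exp (-(β * κ) * ((∫ z, W (x - z) * ρ₁ z) - ∫ z, W (x - z) * ρ₂ z)) with hYdef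
  clear_value Y
  have hYbd : ∀ x, A ≤ Y x ∧ Y x ≤ B := by
    intro x
    have h := hUdiff x
    have h2 : |(β * κ) * ((∫ z, W (x - z) * ρ₁ z) - ∫ z, W (x - z) * ρ₂ z)| ≤ s := by
      rw [abs_mul, abs_of_nonneg (by positivity : (0:ℝ) ≤ β * κ), hsdef]
      exact mul_le_mul_of_nonneg_left h (by positivity)
    rw [abs_le] at h2
    constructor
    · rw [hA]; simp only [hYdef]
      exact Real.exp_le_exp.2 (by linarith)
    · rw [hB]; simp only [hYdef]
      exact Real.exp_le_exp.2 (by linarith)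
  -- ratio relation
  set r : ℝ := c₁ / c₂ with hr
  clear_value r
  have hrpos : 0 < r := by rw [hr]; exact div_pos hc₁ hc₂
  have hratio : ∀ x, ρ₁ x = r * (Y x * ρ₂ x) := by
    intro x
    rw [hr, div_mul_eq_mul_div, eq_div_iff hc₂.ne']
    rw [hρ₁form x, hρ₂form x]
    simp only [hYdef]
    have hexp : Real.exp (-β * (a / 2 * ‖x‖ ^ 2 + κ * ∫ z, W (x - z) * ρ₁ z)) =
        Real.exp (-(β * κ) * ((∫ z, W (x - z) * ρ₁ z) - ∫ z, W (x - z) * ρ₂ z)) *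
        Real.exp (-β * (a / 2 * ‖x‖ ^ 2 + κ * ∫ z, W (x - z) * ρ₂ z)) := by
      rw [← Real.exp_add]
      congr 1
      ring
    rw [hexp]
    ring
  have hYρ₂eq : (fun x => Y x * ρ₂ x) = fun x => r⁻¹ * ρ₁ x := by
    funext x
    rw [hratio x]
    field_simp
  have hYρ₂int : Integrable (fun x => Y x * ρ₂ x) := by
    rw [hYρ₂eq]; exact hρ₁int.const_mul _
  set m : ℝ := ∫ x, Y x * ρ₂ x with hm
  clear_value m
  have hrm : r * m = 1 := by
    rw [hm, ← integral_const_mul, ← hρ₁one]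
    congr 1
    funext y
    rw [hratio y]
  have hmlb : A ≤ m := by
    have h1 : (∫ x, A * ρ₂ x) = A := by rw [integral_const_mul, hρ₂one, mul_one]
    have h2 : (∫ x, A * ρ₂ x) ≤ ∫ x, Y x * ρ₂ x :=
      integral_mono (hρ₂int.const_mul _) hYρ₂int fun x =>
        mul_le_mul_of_nonneg_right (hYbd x).1 (hρ₂nn x)
    rw [← hm] at h2
    linarith
  have hmub : m ≤ B := by
    have h1 : (∫ x, B * ρ₂ x) = B := by rw [integral_const_mul, hρ₂one, mul_one]
    have h2 : (∫ x, Y x * ρ₂ x) ≤ ∫ x, B * ρ₂ x :=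
      integral_mono hYρ₂int (hρ₂int.const_mul _) fun x =>
        mul_le_mul_of_nonneg_right (hYbd x).2 (hρ₂nn x)
    rw [← hm] at h2
    linarith
  have hmpos : 0 < m := lt_of_lt_of_le hApos hmlb
  -- key pointwise identity
  have hkey : ∀ x, m * |ρ₁ x - ρ₂ x| = ρ₂ x * |Y x - m| := by
    intro x
    have h3 : m * (r * (Y x * ρ₂ x) - ρ₂ x) = ρ₂ x * (Y x - m) := by
      linear_combination (ρ₂ x * Y x) * hrm
    calc m * |ρ₁ x - ρ₂ x| = |m * (ρ₁ x - ρ₂ x)| := by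
          rw [abs_mul, abs_of_nonneg hmpos.le]
      _ = |ρ₂ x * (Y x - m)| := by rw [hratio x, h3]
      _ = ρ₂ x * |Y x - m| := by rw [abs_mul, abs_of_nonneg (hρ₂nn x)]
  have hT0 : T = 0 := by
    rcases le_or_gt B A with hBA | hAB
    · -- degenerate case: A = B, so Y x = m for all x
      have hmT : m * T ≤ 0 := by
        rw [hTdef, ← integral_const_mul]
        apply integral_nonpos
        intro x
        have h1 := (hYbd x).1
        have h2 := (hYbd x).2
        have hYm : Y x = m := le_antisymm (by linarith) (by linarith)
        simp only [Pi.zero_apply]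
        rw [hkey x, hYm]
        simp
      nlinarith
    · -- main case
      have hg₀eq : (fun x => ρ₂ x * (Y x - m)) = fun x => Y x * ρ₂ x - m * ρ₂ x := by
        funext x; ring
      have hg₀ : Integrable (fun x => ρ₂ x * (Y x - m)) := by
        rw [hg₀eq]; exact hYρ₂int.sub (hρ₂int.const_mul m)
      have hgPeq : (fun x => ρ₂ x * max (Y x - m) 0) = fun x => max (ρ₂ x * (Y x - m)) 0 := by
        funext x
        rw [mul_max_of_nonneg _ _ (hρ₂nn x), mul_zero]
      have hgP : Integrable (fun x => ρ₂ x * max (Y x - m) 0) := by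
        rw [hgPeq]; exact hg₀.pos_part
      have hzero : (∫ x, ρ₂ x * (Y x - m)) = 0 := by
        rw [hg₀eq, integral_sub hYρ₂int (hρ₂int.const_mul m), integral_const_mul, hρ₂one, ← hm]
        ring
      set P : ℝ := ∫ x, ρ₂ x * max (Y x - m) 0 with hP
      clear_value P
      have habs0 : ∀ t : ℝ, |t| = 2 * max t 0 - t := by
        intro t
        rcases le_total 0 t with h | h
        · rw [abs_of_nonneg h, max_eq_left h]; ring
        · rw [abs_of_nonpos h, max_eq_right h]; ring
      have hMT : m * T = 2 * P := by
        have heq : (fun x => m * |ρ₁ x - ρ₂ x|)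
            = fun x => 2 * (ρ₂ x * max (Y x - m) 0) - ρ₂ x * (Y x - m) := by
          funext x
          rw [hkey x, habs0 (Y x - m)]
          ring
        rw [hTdef, ← integral_const_mul, heq,
          integral_sub (hgP.const_mul 2) hg₀, integral_const_mul, hzero, ← hP]
        ring
      -- chord bound
      have hYAeq : (fun x => ρ₂ x * (Y x - A)) = fun x => Y x * ρ₂ x - A * ρ₂ x := by
        funext x; ring
      have hYAint : Integrable (fun x => ρ₂ x * (Y x - A)) := by
        rw [hYAeq]; exact hYρ₂int.sub (hρ₂int.const_mul A)
      have hYAval : (∫ x, ρ₂ x * (Y x - A)) = m - A := by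
        rw [hYAeq, integral_sub hYρ₂int (hρ₂int.const_mul A), integral_const_mul, hρ₂one, ← hm]
        ring
      have hchord : (B - A) * P ≤ (B - m) * (m - A) := by
        have h1 : (B - A) * P = ∫ x, (B - A) * (ρ₂ x * max (Y x - m) 0) := by
          rw [integral_const_mul, hP]
        have h2 : (∫ x, (B - A) * (ρ₂ x * max (Y x - m) 0))
            ≤ ∫ x, (B - m) * (ρ₂ x * (Y x - A)) := by
          refine integral_mono (hgP.const_mul _) (hYAint.const_mul _) fun x => ?_
          rcases le_total (Y x - m) 0 with h | h
          · rw [max_eq_right h]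
            have := mul_nonneg (mul_nonneg (sub_nonneg.2 hmub)
              (hρ₂nn x)) (sub_nonneg.2 (hYbd x).1)
            nlinarith
          · rw [max_eq_left h]
            nlinarith [mul_nonneg (mul_nonneg (hρ₂nn x) (sub_nonneg.2 (hYbd x).2))
              (sub_nonneg.2 hmlb)]
        have h3 : (∫ x, (B - m) * (ρ₂ x * (Y x - A))) = (B - m) * (m - A) := by
          rw [integral_const_mul, hYAval]
        linarith
      have hamgm : (B - m) * (m - A) ≤ m * (A + B - 2) := by
        nlinarith [sq_nonneg (m - 1), hAB1]
      have hexp2 : 2 * (A + B - 2) ≤ s * (B - A) := by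
        rw [hA, hB]
        exact gibbs_aux_exp2 s hs
      -- combine
      have hTs : T ≤ s := by
        have hc1 : (B - A) * (m * T) ≤ 2 * ((B - m) * (m - A)) := by
          rw [hMT]; linarith [hchord, hchord]
        have hc3 : 2 * ((B - m) * (m - A)) ≤ 2 * (m * (A + B - 2)) := by linarith
        have hc4 : m * (2 * (A + B - 2)) ≤ m * (s * (B - A)) :=
          mul_le_mul_of_nonneg_left hexp2 hmpos.le
        have hfin : (B - A) * (m * T) ≤ m * (s * (B - A)) := by nlinarith
        nlinarith [mul_pos hmpos (sub_pos.2 hAB)]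
      rw [hsdef] at hTs
      rcases hTnn.eq_or_lt with h | hTpos
      · exact h.symm
      · exfalso
        have := mul_lt_mul_of_pos_right hsmall hTpos
        nlinarith
  -- conclude
  have hII : ∀ x, (∫ z, W (x - z) * ρ₁ z) = ∫ z, W (x - z) * ρ₂ z := by
    intro x
    have h := hUdiff x
    rw [hT0, mul_zero] at h
    have := le_antisymm h (abs_nonneg _)
    exact sub_eq_zero.1 (abs_eq_zero.1 this)
  have hcc : c₁ = c₂ := by
    have hsame : ∀ y, c₂ * ρ₁ y = c₁ * ρ₂ y := by
      intro y
      rw [hρ₁form y, hρ₂form y, hII y]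
      ring
    calc c₁ = ∫ y, c₁ * ρ₂ y := by rw [integral_const_mul, hρ₂one, mul_one]
      _ = ∫ y, c₂ * ρ₁ y := by simp only [hsame]
      _ = c₂ := by rw [integral_const_mul, hρ₁one, mul_one]
  funext p
  obtain ⟨x, v⟩ := p
  rw [hfixρ₁ x v, hfixρ₂ x v, hII x, hcc]
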